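/- arXiv:2002.08691 — 5 statements merged into one kernel-verified Lean document; each statement's English description precedes it below -/
import Mathlib

section
/- Assume the Setup. If L ∈ B and there exists a nonzero D ∈ A with L·D = D·L₀, then L = L₀. -/
/-- `adOp a b x = a*x - x*b`, the operator `ad_{a,b}`. -/
def adOp {A : Type*} [Ring A] (a b : A) : A → A := fun x => a * x - x * b

/-- The ad-nilpotency degree of `b` with respect to `L₀`:
the smallest `n` with `ad_{L₀}^[n+1] b = 0`. -/
noncomputable def degAd {A : Type*} [Ring A] (L₀ b : A) : ℕ :=
  sInf {n : ℕ | (adOp L₀ L₀)^[n + 1] b = 0}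

/-- Condition (2) of Theorem 4.4: `L = L₀` or `deg(L - L₀) < 0`, expressed via some `s' ∈ S`
with `s'(L - L₀)` a nonzero element of `B` of `ad_{L₀}`-degree smaller than that of `s'`. -/
def cond2 {k A : Type*} [CommSemiring k] [Ring A] [Algebra k A]
    (B : Subalgebra k A) (S : Set A) (L₀ L : A) : Prop :=
  L = L₀ ∨ ∃ s' ∈ S, s' * (L - L₀) ∈ B ∧ s' * (L - L₀) ≠ 0 ∧
    degAd L₀ (s' * (L - L₀)) < degAd L₀ s'

/-- A `k`-subspace of the `A`-module `M` (with `k` acting through `algebraMap k A`). -/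
def isSubspace (k A : Type*) {M : Type*} [CommSemiring k] [Ring A] [Algebra k A]
    [AddCommGroup M] [Module A M] (U : Set M) : Prop :=
  (0 : M) ∈ U ∧ (∀ u ∈ U, ∀ v ∈ U, u + v ∈ U) ∧
    (∀ c : k, ∀ u ∈ U, (algebraMap k A c) • u ∈ U)

section AuxAd

variable {A : Type*} [Ring A] (L₀ : A)

lemma adOp_zero' : adOp L₀ L₀ 0 = 0 := by simp [adOp]

lemma adOp_mul' (x y : A) :
    adOp L₀ L₀ (x * y) = adOp L₀ L₀ x * y + x * adOp L₀ L₀ y := by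
  simp only [adOp]; noncomm_ring

lemma adOp_add' (x y : A) :
    adOp L₀ L₀ (x + y) = adOp L₀ L₀ x + adOp L₀ L₀ y := by
  simp only [adOp]; noncomm_ring

lemma adOp_sub' (x y : A) :
    adOp L₀ L₀ (x - y) = adOp L₀ L₀ x - adOp L₀ L₀ y := by
  simp only [adOp]; noncomm_ring

lemma adIter_zero (n : ℕ) : (adOp L₀ L₀)^[n] 0 = 0 := by
  induction n with
  | zero => rfl
  | succ n ih => rw [Function.iterate_succ_apply, adOp_zero', ih]

lemma adIter_add (n : ℕ) (x y : A) :
    (adOp L₀ L₀)^[n] (x + y) = (adOp L₀ L₀)^[n] x + (adOp L₀ L₀)^[n] y := by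
  induction n generalizing x y with
  | zero => rfl
  | succ n ih =>
    rw [Function.iterate_succ_apply, Function.iterate_succ_apply,
      Function.iterate_succ_apply, adOp_add', ih]

lemma adIter_sub (n : ℕ) (x y : A) :
    (adOp L₀ L₀)^[n] (x - y) = (adOp L₀ L₀)^[n] x - (adOp L₀ L₀)^[n] y := by
  induction n generalizing x y with
  | zero => rfl
  | succ n ih =>
    rw [Function.iterate_succ_apply, Function.iterate_succ_apply,
      Function.iterate_succ_apply, adOp_sub', ih]

lemma adIter_stable {m : ℕ} {a : A} (h : (adOp L₀ L₀)^[m] a = 0) {N : ℕ} (hN : m ≤ N) :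
    (adOp L₀ L₀)^[N] a = 0 := by
  obtain ⟨kk, rfl⟩ := Nat.exists_eq_add_of_le hN
  rw [add_comm, Function.iterate_add_apply, h, adIter_zero]

lemma adIter_mul_left {a : A} (ha : adOp L₀ L₀ a = 0) (n : ℕ) (b : A) :
    (adOp L₀ L₀)^[n] (a * b) = a * (adOp L₀ L₀)^[n] b := by
  induction n generalizing b with
  | zero => rfl
  | succ n ih =>
    rw [Function.iterate_succ_apply, Function.iterate_succ_apply, adOp_mul', ha,
      zero_mul, zero_add, ih]

lemma adIter_mul_right {b : A} (hb : adOp L₀ L₀ b = 0) (n : ℕ) (a : A) :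
    (adOp L₀ L₀)^[n] (a * b) = (adOp L₀ L₀)^[n] a * b := by
  induction n generalizing a with
  | zero => rfl
  | succ n ih =>
    rw [Function.iterate_succ_apply, Function.iterate_succ_apply, adOp_mul', hb,
      mul_zero, add_zero, ih]

lemma adIter_mul (m n : ℕ) (a b : A)
    (ha : (adOp L₀ L₀)^[m + 1] a = 0) (hb : (adOp L₀ L₀)^[n + 1] b = 0) :
    (adOp L₀ L₀)^[m + n] (a * b)
      = (m + n).choose m • ((adOp L₀ L₀)^[m] a * (adOp L₀ L₀)^[n] b) := by
  induction m generalizing n a b with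
  | zero =>
    rw [Function.iterate_one] at ha
    rw [zero_add, adIter_mul_left L₀ ha, Nat.choose_zero_right, one_smul,
      Function.iterate_zero_apply]
  | succ m ihm =>
    induction n generalizing a b with
    | zero =>
      rw [Function.iterate_one] at hb
      rw [add_zero, adIter_mul_right L₀ hb, Nat.choose_self, one_smul,
        Function.iterate_zero_apply]
    | succ n ihn =>
      have ha' : (adOp L₀ L₀)^[m + 1] (adOp L₀ L₀ a) = 0 := by
        rw [← Function.iterate_succ_apply]; exact ha
      have hb' : (adOp L₀ L₀)^[n + 1] (adOp L₀ L₀ b) = 0 := by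
        rw [← Function.iterate_succ_apply]; exact hb
      have h1 := ihm (n + 1) (adOp L₀ L₀ a) b ha' hb
      have h2 := ihn a (adOp L₀ L₀ b) ha hb'
      have e1 : (m + 1) + (n + 1) = (m + (n + 1)) + 1 := by omega
      rw [e1, Function.iterate_succ_apply, adOp_mul', adIter_add, h1,
        show m + (n + 1) = (m + 1) + n by omega, h2,
        ← Function.iterate_succ_apply, ← Function.iterate_succ_apply,
        ← add_smul]
      congr 1

lemma adIter_exists_deg (x : A) (hx : x ≠ 0) (h : ∃ n, (adOp L₀ L₀)^[n] x = 0) :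
    ∃ m, (adOp L₀ L₀)^[m] x ≠ 0 ∧ (adOp L₀ L₀)^[m + 1] x = 0 := by
  classical
  have hN := Nat.find_spec h
  have hN0 : Nat.find h ≠ 0 := by
    intro h0; rw [h0, Function.iterate_zero_apply] at hN; exact hx hN
  obtain ⟨m, hm⟩ := Nat.exists_eq_succ_of_ne_zero hN0
  refine ⟨m, Nat.find_min h (by omega), by rw [show m + 1 = Nat.find h from by omega]; exact hN⟩

end AuxAd

/-- Remark 4.6: if `L ∈ B` (i.e. `L` preserves `U₀`) and `L·D = D·L₀` for some nonzero `D ∈ A`,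
then `L = L₀`. -/
theorem stmt10
    {k A M : Type*} [Field k] [CharZero k] [Ring A] [IsDomain A] [Algebra k A]
    [AddCommGroup M] [Module A M]
    (B R : Subalgebra k A) (hRB : R ≤ B)
    (hRcomm : ∀ x ∈ R, ∀ y ∈ R, x * y = y * x)
    (S : Set A) (hSR : S ⊆ (R : Set A)) (hS0 : (0 : A) ∉ S) (hS1 : (1 : A) ∈ S)
    (hSmul : ∀ s ∈ S, ∀ t ∈ S, s * t ∈ S)
    (hSunit : ∀ s ∈ S, IsUnit s)
    (hleft : ∀ a : A, ∃ s ∈ S, s * a ∈ B)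
    (hright : ∀ a : A, ∃ s ∈ S, a * s ∈ B)
    (U₀ : Set M) (hU₀0 : (0 : M) ∈ U₀)
    (hU₀add : ∀ u ∈ U₀, ∀ v ∈ U₀, u + v ∈ U₀)
    (hU₀neg : ∀ u ∈ U₀, -u ∈ U₀)
    (hU₀R : ∀ r ∈ (R : Set A), ∀ u ∈ U₀, r • u ∈ U₀)
    (hB : ∀ a : A, a ∈ B ↔ ∀ u ∈ U₀, a • u ∈ U₀)
    (L₀ : A) (hL₀ : L₀ ∈ B)
    (hnil : ∀ b ∈ B, ∃ n : ℕ, (adOp L₀ L₀)^[n] b = 0)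
    (L : A) (hL : L ∈ B) (D : A) (hD : D ≠ 0) (hLD : L * D = D * L₀) :
    L = L₀ := by
  classical
  by_contra hne
  have hCZ : CharZero A := charZero_of_injective_algebraMap (algebraMap k A).injective
  have hX0 : L - L₀ ≠ 0 := sub_ne_zero.mpr hne
  have hXB : L - L₀ ∈ B := B.sub_mem hL hL₀
  obtain ⟨d, hXd, hXd1⟩ := adIter_exists_deg L₀ (L - L₀) hX0 (hnil _ hXB)
  obtain ⟨s, hsS, hsB⟩ := hleft D
  have hs0 : s ≠ 0 := fun h => hS0 (h ▸ hsS)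
  obtain ⟨m, hsm, hsm1⟩ := adIter_exists_deg L₀ s hs0 (hnil s (hRB (hSR hsS)))
  have hδD : adOp L₀ L₀ D = -((L - L₀) * D) := by
    simp only [adOp]
    rw [← hLD]; noncomm_ring
  set X := L - L₀ with hXdef
  let Q : ℕ → A := fun n => Nat.rec s (fun _ q => adOp L₀ L₀ q - q * X) n
  have hQs : ∀ n, Q (n + 1) = adOp L₀ L₀ (Q n) - Q n * X := fun n => rfl
  have key : ∀ n, (adOp L₀ L₀)^[n] (s * D) = Q n * D ∧
      (adOp L₀ L₀)^[m + n * d] (Q n) ≠ 0 ∧ (adOp L₀ L₀)^[m + n * d + 1] (Q n) = 0 := by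
    intro n
    induction n with
    | zero =>
      exact ⟨rfl, by show (adOp L₀ L₀)^[m + 0 * d] s ≠ 0; simpa using hsm,
        by show (adOp L₀ L₀)^[m + 0 * d + 1] s = 0; simpa using hsm1⟩
    | succ n ih =>
      obtain ⟨h1, h2, h3⟩ := ih
      have he : m + (n + 1) * d = (m + n * d) + d := by ring
      have hmul_eq := adIter_mul L₀ (m + n * d) d (Q n) X h3 hXd1
      have hmul_ne : (adOp L₀ L₀)^[m + n * d + d] (Q n * X) ≠ 0 := by
        rw [hmul_eq, nsmul_eq_mul]
        exact mul_ne_zero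
          (Nat.cast_ne_zero.mpr (Nat.choose_pos (Nat.le_add_right _ _)).ne')
          (mul_ne_zero h2 hXd)
      have h3' : (adOp L₀ L₀)^[(m + n * d + 1) + 1] (Q n) = 0 :=
        adIter_stable L₀ h3 (by omega)
      have hmul_z : (adOp L₀ L₀)^[m + n * d + d + 1] (Q n * X) = 0 := by
        have := adIter_mul L₀ (m + n * d + 1) d (Q n) X h3' hXd1
        rw [show m + n * d + d + 1 = (m + n * d + 1) + d by omega, this, h3,
          zero_mul, smul_zero]
      have hdQ_z : ∀ N, m + n * d + 1 ≤ N + 1 →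
          (adOp L₀ L₀)^[N] (adOp L₀ L₀ (Q n)) = 0 := by
        intro N hN
        rw [← Function.iterate_succ_apply]
        exact adIter_stable L₀ h3 hN
      refine ⟨?_, ?_, ?_⟩
      · rw [Function.iterate_succ_apply', h1]
        rw [adOp_mul' L₀ (Q n) D, hδD, hQs]
        noncomm_ring
      · rw [he, hQs, adIter_sub, hdQ_z _ (by omega), zero_sub]
        exact neg_ne_zero.mpr hmul_ne
      · rw [he, hQs, adIter_sub, hdQ_z _ (by omega), hmul_z, sub_zero]
  obtain ⟨N, hN⟩ := hnil (s * D) hsB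
  obtain ⟨h1, h2, _⟩ := key N
  have hQN : Q N = 0 := by
    rcases mul_eq_zero.mp (h1 ▸ hN) with h | h
    · exact h
    · exact absurd h hD
  rw [hQN, adIter_zero] at h2
  exact h2 rfl
end

section
/- Let n ≥ 1 and let B(x, y) = Σᵢ xᵢyᵢ denote the standard symmetric bilinear form on ℂⁿ. Let A₊ ⊆ ℂⁿ be a finite set of pairwise non-proportional vectors with B(α, α) ≠ 0 for all α ∈ A₊, let R₊ ⊆ A₊ be a subset, and let k : A₊ → ℂ be a multiplicity function with k_α a positive integer for every α ∈ A₊ \ R₊. For α ∈ A₊ \ R₊, 1 ≤ j ≤ k_α, and a subset C ⊆ A₊ containing α, say the locus condition L_C(α, j) holds if for every x ∈ ℂⁿ with B(α, x) = 0 and B(β, x) ≠ 0 for all β ∈ C \ {α}, one has Σ_{β ∈ C \ {α}} k_β(k_β+1)·B(β, β)·B(α, β)^{2j−1} / B(β, x)^{2j+1} = 0. Then the following are equivalent: (a) L_{A₊}(α, j) holds for every α ∈ A₊ \ R₊ and every 1 ≤ j ≤ k_α; (b) for every two-dimensional linear subspace V′ ⊆ ℂⁿ, every α ∈ (A₊ \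 R₊) ∩ V′ and every 1 ≤ j ≤ k_α, the condition L_{A₊ ∩ V′}(α, j) holds. -/
open Classical

/-- The standard symmetric bilinear form `B(x,y) = Σᵢ xᵢ yᵢ` on `ℂⁿ`. -/
noncomputable def Bform {n : ℕ} (x y : Fin n → ℂ) : ℂ := ∑ i, x i * y i

/-- The locus condition `L_C(α, j)` for a configuration `C` with multiplicities `kk`. -/
def locusCond {n : ℕ} (C : Finset (Fin n → ℂ)) (kk : (Fin n → ℂ) → ℂ)
    (α : Fin n → ℂ) (j : ℕ) : Prop :=
  ∀ x : Fin n → ℂ, Bform α x = 0 → (∀ β ∈ C.erase α, Bform β x ≠ 0) →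
    ∑ β ∈ C.erase α,
      kk β * (kk β + 1) * Bform β β * (Bform α β) ^ (2 * j - 1) / (Bform β x) ^ (2 * j + 1)
      = 0

section Aux

open Filter Module

lemma Bform_add_smul {n : ℕ} (v x z : Fin n → ℂ) (c : ℂ) :
    Bform v (x + c • z) = Bform v x + c * Bform v z := by
  unfold Bform
  rw [Finset.mul_sum, ← Finset.sum_add_distrib]
  refine Finset.sum_congr rfl fun i _ => ?_
  simp only [Pi.add_apply, Pi.smul_apply, smul_eq_mul]; ring

lemma Bform_zero_right {n : ℕ} (v : Fin n → ℂ) : Bform v 0 = 0 := by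
  unfold Bform; simp

lemma Bform_eq_dual {n : ℕ} (f : Module.Dual ℂ (Fin n → ℂ)) (v : Fin n → ℂ) :
    Bform v (fun i => f (Pi.single i 1)) = f v := by
  have hv : v = ∑ i, v i • (Pi.single i 1 : Fin n → ℂ) := by
    ext j; simp [Pi.single_apply]
  conv_rhs => rw [hv]
  rw [map_sum]
  unfold Bform
  exact Finset.sum_congr rfl fun i _ => by rw [map_smul]; simp [smul_eq_mul]

/-- Separating vector for a single `γ ∉ V`. -/
lemma exists_sep {n : ℕ} (V : Submodule ℂ (Fin n → ℂ)) (γ : Fin n → ℂ) (hγ : γ ∉ V) :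
    ∃ z : Fin n → ℂ, (∀ v ∈ V, Bform v z = 0) ∧ Bform γ z ≠ 0 := by
  obtain ⟨f, hf1, hf2⟩ := V.exists_dual_map_eq_bot_of_notMem hγ inferInstance
  refine ⟨fun i => f (Pi.single i 1), fun v hv => ?_, by rw [Bform_eq_dual]; exact hf1⟩
  rw [Bform_eq_dual]
  have : f v ∈ V.map f := Submodule.mem_map_of_mem hv
  rw [hf2] at this; simpa using this

/-- Simultaneous separating vector for finitely many `γ ∉ V`. -/
lemma exists_sep_all {n : ℕ} (V : Submodule ℂ (Fin n → ℂ)) (T : Finset (Fin n → ℂ))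
    (hT : ∀ γ ∈ T, γ ∉ V) :
    ∃ z : Fin n → ℂ, (∀ v ∈ V, Bform v z = 0) ∧ ∀ γ ∈ T, Bform γ z ≠ 0 := by
  classical
  induction T using Finset.induction_on with
  | empty => exact ⟨0, fun v _ => Bform_zero_right v, fun γ h => absurd h (by simp)⟩
  | @insert γ T hγT ih =>
    obtain ⟨z₁, hz₁V, hz₁⟩ := ih (fun β hβ => hT β (Finset.mem_insert_of_mem hβ))
    obtain ⟨z₂, hz₂V, hz₂⟩ := exists_sep V γ (hT γ (Finset.mem_insert_self γ T))
    obtain ⟨c, hc⟩ := Infinite.exists_notMem_finset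
      ((insert γ T).image (fun β => -Bform β z₁ / Bform β z₂))
    refine ⟨z₁ + c • z₂, fun v hv => by rw [Bform_add_smul, hz₁V v hv, hz₂V v hv]; ring,
      fun β hβ => ?_⟩
    rw [Bform_add_smul]
    intro h0
    by_cases h2 : Bform β z₂ = 0
    · rcases Finset.mem_insert.mp hβ with rfl | hβT
      · exact hz₂ h2
      · apply hz₁ β hβT; rw [h2, mul_zero, add_zero] at h0; exact h0
    · apply hc
      refine Finset.mem_image.mpr ⟨β, hβ, ?_⟩
      field_simp
      linear_combination -h0

lemma norm_lin_tendsto (a b : ℂ) (ha : a ≠ 0) :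
    Tendsto (fun r : ℝ => ‖b + (r : ℂ) * a‖) atTop atTop := by
  apply tendsto_atTop_mono (f := fun r : ℝ => r * ‖a‖ - ‖b‖)
  · intro r
    calc r * ‖a‖ - ‖b‖ ≤ |r| * ‖a‖ - ‖b‖ := by
          nlinarith [le_abs_self r, norm_nonneg a]
      _ = ‖(r : ℂ) * a‖ - ‖(-b)‖ := by
          rw [norm_mul, Complex.norm_real, Real.norm_eq_abs, norm_neg]
      _ ≤ ‖(r : ℂ) * a - (-b)‖ := norm_sub_norm_le _ _
      _ = ‖b + (r : ℂ) * a‖ := by ring_nf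
  · exact tendsto_atTop_add_const_right _ _ (tendsto_id.atTop_mul_const (norm_pos_iff.mpr ha))

lemma lin_pow_inv_tendsto (a b c : ℂ) (ha : a ≠ 0) (mm : ℕ) (hm : mm ≠ 0) :
    Tendsto (fun r : ℝ => c / (b + (r : ℂ) * a) ^ mm) atTop (nhds 0) := by
  rw [tendsto_zero_iff_norm_tendsto_zero]
  have h1 : Tendsto (fun r : ℝ => ‖b + (r : ℂ) * a‖ ^ mm) atTop atTop :=
    (tendsto_pow_atTop hm).comp (norm_lin_tendsto a b ha)
  have := (tendsto_const_nhds (x := ‖c‖) (f := atTop (α := ℝ))).div_atTop h1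
  refine this.congr fun r => ?_
  rw [norm_div, norm_pow]

lemma span_pair_finrank {n : ℕ} {α β : Fin n → ℂ} (hα : α ≠ 0) (hne : ∀ c : ℂ, β ≠ c • α) :
    finrank ℂ (Submodule.span ℂ {α, β}) = 2 := by
  have hli : LinearIndependent ℂ ![β, α] := by
    refine linearIndependent_fin2.mpr ⟨by simpa using hα, fun a h => ?_⟩
    exact hne a (by simpa using h.symm)
  have := finrank_span_eq_card (R := ℂ) hli
  rw [show Set.range ![β, α] = {α, β} by
    simp [Matrix.range_cons, Matrix.range_empty, Set.pair_comm]] at this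
  simpa using this

lemma span_pair_eq {n : ℕ} {α β : Fin n → ℂ} (V : Submodule ℂ (Fin n → ℂ))
    (hV : finrank ℂ V = 2) (hαV : α ∈ V) (hβV : β ∈ V) (hα : α ≠ 0)
    (hne : ∀ c : ℂ, β ≠ c • α) : Submodule.span ℂ {α, β} = V := by
  apply Submodule.eq_of_le_of_finrank_le
  · rw [Submodule.span_le]; intro v hv
    rcases hv with rfl | hv
    · exact hαV
    · simp at hv; subst hv; exact hβV
  · rw [hV, span_pair_finrank hα hne]

end Aux

/-- Proposition 6.1: a configuration satisfies the locus conditions if and only if each of its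
two-dimensional sub-configurations does. -/
theorem stmt13 {n : ℕ} (hn : 1 ≤ n)
    (Aplus Rplus : Finset (Fin n → ℂ)) (hRA : Rplus ⊆ Aplus)
    (hprop : ∀ α ∈ Aplus, ∀ β ∈ Aplus, α ≠ β → ∀ c : ℂ, α ≠ c • β)
    (hiso : ∀ α ∈ Aplus, Bform α α ≠ 0)
    (kk : (Fin n → ℂ) → ℂ) (m : (Fin n → ℂ) → ℕ)
    (hint : ∀ α ∈ Aplus, α ∉ Rplus → kk α = (m α : ℂ) ∧ 1 ≤ m α) :
    (∀ α ∈ Aplus, α ∉ Rplus → ∀ j : ℕ, 1 ≤ j → j ≤ m α → locusCond Aplus kk α j)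
    ↔
    (∀ V' : Submodule ℂ (Fin n → ℂ), Module.finrank ℂ V' = 2 →
      ∀ α ∈ Aplus, α ∉ Rplus → α ∈ V' → ∀ j : ℕ, 1 ≤ j → j ≤ m α →
        locusCond (Aplus.filter (fun v => v ∈ V')) kk α j) := by
  classical
  constructor
  · -- full locus conditions imply the 2-dimensional ones
    intro hfull V hV2 α hαA hαR hαV j hj1 hj2
    intro x hx hxβ
    set Aset : Finset (Fin n → ℂ) := Aplus.filter (fun v => v ∈ V) with hAset
    set T : Finset (Fin n → ℂ) := Aplus.filter (fun v => v ∉ V) with hTdef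
    have hTnot : ∀ γ ∈ T, γ ∉ V := fun γ hγ => (Finset.mem_filter.mp hγ).2
    obtain ⟨z, hzV, hzT⟩ := exists_sep_all V T hTnot
    set S : ℂ := ∑ β ∈ Aset.erase α,
      kk β * (kk β + 1) * Bform β β * (Bform α β) ^ (2 * j - 1) / (Bform β x) ^ (2 * j + 1)
      with hS
    show S = 0
    -- eventual nonvanishing on the lines x + r z
    have hev : ∀ᶠ r : ℝ in Filter.atTop, ∀ γ ∈ T, Bform γ (x + (r : ℂ) • z) ≠ 0 := by
      rw [Filter.eventually_all_finset]
      intro γ hγ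
      have h1 := (norm_lin_tendsto (Bform γ z) (Bform γ x) (hzT γ hγ)).eventually_ge_atTop 1
      refine h1.mono fun r hr hzero => ?_
      rw [Bform_add_smul] at hzero
      rw [hzero] at hr
      simp at hr
      linarith
    -- the eventual identity
    have hkey : (fun r : ℝ => -∑ γ ∈ T,
        kk γ * (kk γ + 1) * Bform γ γ * (Bform α γ) ^ (2 * j - 1) /
          (Bform γ x + (r : ℂ) * Bform γ z) ^ (2 * j + 1))
        =ᶠ[Filter.atTop] (fun _ : ℝ => S) := by
      refine hev.mono fun r hr => ?_
      have h0 : Bform α (x + (r : ℂ) • z) = 0 := by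
        rw [Bform_add_smul, hx, hzV α hαV]; ring
      have hall : ∀ β ∈ Aplus.erase α, Bform β (x + (r : ℂ) • z) ≠ 0 := by
        intro β hβ
        obtain ⟨hβα, hβA⟩ := Finset.mem_erase.mp hβ
        by_cases hβV : β ∈ V
        · rw [Bform_add_smul, hzV β hβV, mul_zero, add_zero]
          exact hxβ β (Finset.mem_erase.mpr ⟨hβα, Finset.mem_filter.mpr ⟨hβA, hβV⟩⟩)
        · exact hr β (Finset.mem_filter.mpr ⟨hβA, hβV⟩)
      have hfull_at := hfull α hαA hαR j hj1 hj2 (x + (r : ℂ) • z) h0 hall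
      have e1 : (Aplus.erase α).filter (fun b => b ∈ V) = Aset.erase α := by
        ext β
        simp only [Finset.mem_filter, Finset.mem_erase, hAset]
        tauto
      have e2 : (Aplus.erase α).filter (fun b => b ∉ V) = T := by
        ext β
        simp only [Finset.mem_filter, Finset.mem_erase, hTdef]
        constructor
        · tauto
        · rintro ⟨hβA, hβV⟩
          exact ⟨⟨fun h => hβV (h ▸ hαV), hβA⟩, hβV⟩
      rw [← Finset.sum_filter_add_sum_filter_not (Aplus.erase α) (fun b => b ∈ V)] at hfull_at
      rw [e1, e2] at hfull_at
      have eS : ∑ β ∈ Aset.erase α,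
          kk β * (kk β + 1) * Bform β β * (Bform α β) ^ (2 * j - 1) /
            (Bform β (x + (r : ℂ) • z)) ^ (2 * j + 1) = S := by
        rw [hS]
        refine Finset.sum_congr rfl fun β hβ => ?_
        obtain ⟨hβα, hβAV⟩ := Finset.mem_erase.mp hβ
        have hβV : β ∈ V := (Finset.mem_filter.mp hβAV).2
        rw [Bform_add_smul, hzV β hβV, mul_zero, add_zero]
      have eT : ∑ γ ∈ T,
          kk γ * (kk γ + 1) * Bform γ γ * (Bform α γ) ^ (2 * j - 1) /
            (Bform γ (x + (r : ℂ) • z)) ^ (2 * j + 1)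
          = ∑ γ ∈ T,
          kk γ * (kk γ + 1) * Bform γ γ * (Bform α γ) ^ (2 * j - 1) /
            (Bform γ x + (r : ℂ) * Bform γ z) ^ (2 * j + 1) := by
        refine Finset.sum_congr rfl fun γ _ => ?_
        rw [Bform_add_smul]
      rw [eS, eT] at hfull_at
      linear_combination -hfull_at
    -- the tail sum tends to zero
    have hT0 : Filter.Tendsto (fun r : ℝ => -∑ γ ∈ T,
        kk γ * (kk γ + 1) * Bform γ γ * (Bform α γ) ^ (2 * j - 1) /
          (Bform γ x + (r : ℂ) * Bform γ z) ^ (2 * j + 1)) Filter.atTop (nhds 0) := by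
      have h0 : (0 : ℂ) = -∑ γ ∈ T, (0 : ℂ) := by simp
      rw [h0]
      exact (tendsto_finset_sum T fun γ hγ =>
        lin_pow_inv_tendsto (Bform γ z) (Bform γ x) _ (hzT γ hγ) (2 * j + 1) (by omega)).neg
    have hconst : Filter.Tendsto (fun _ : ℝ => S) Filter.atTop (nhds 0) := hT0.congr' hkey
    exact tendsto_nhds_unique tendsto_const_nhds hconst
  · -- the 2-dimensional conditions imply the full ones
    intro h2d α hαA hαR j hj1 hj2 x hx hxβ
    have hα0 : α ≠ 0 := by
      intro h
      exact hiso α hαA (by rw [h]; exact Bform_zero_right 0)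
    set g : (Fin n → ℂ) → Submodule ℂ (Fin n → ℂ) := fun β => Submodule.span ℂ {α, β} with hg
    rw [← Finset.sum_fiberwise_of_maps_to (g := g) (t := (Aplus.erase α).image g)
      (fun β hβ => Finset.mem_image_of_mem g hβ)]
    refine Finset.sum_eq_zero fun V hV => ?_
    obtain ⟨β₀, hβ₀, rfl⟩ := Finset.mem_image.mp hV
    obtain ⟨hβ₀α, hβ₀A⟩ := Finset.mem_erase.mp hβ₀
    have hβ₀prop : ∀ c : ℂ, β₀ ≠ c • α := hprop β₀ hβ₀A α hαA hβ₀α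
    have hV2 : Module.finrank ℂ (g β₀) = 2 := span_pair_finrank hα0 hβ₀prop
    have hαV : α ∈ g β₀ := Submodule.subset_span (Set.mem_insert _ _)
    have hβ₀V : β₀ ∈ g β₀ := Submodule.subset_span (Set.mem_insert_of_mem _ rfl)
    have hfib : (Aplus.erase α).filter (fun b => g b = g β₀)
        = (Aplus.filter (fun v => v ∈ g β₀)).erase α := by
      ext β
      simp only [Finset.mem_filter, Finset.mem_erase]
      constructor
      · rintro ⟨⟨hβα, hβA⟩, hgβ⟩
        exact ⟨hβα, hβA, hgβ ▸ Submodule.subset_span (Set.mem_insert_of_mem _ rfl)⟩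
      · rintro ⟨hβα, hβA, hβV⟩
        exact ⟨⟨hβα, hβA⟩,
          span_pair_eq (g β₀) hV2 hαV hβV hα0 (hprop β hβA α hαA hβα)⟩
    rw [hfib]
    exact h2d (g β₀) hV2 α hαA hαR hαV j hj1 hj2 x hx
      (fun β hβ => hxβ β (Finset.mem_erase.mpr
        ⟨(Finset.mem_erase.mp hβ).1, (Finset.mem_filter.mp (Finset.mem_erase.mp hβ).2).1⟩))
end

section
/- Let n₁, n₂, n₃ ≥ 0 be integers and a, b, c ∈ ℂ \ {0} with a² + b² ≠ 0. For d ≥ 1 define the deformed power sum p_d ∈ ℂ[x₁,…,x_{n₁}, x′₁,…,x′_{n₂}, x″₁,…,x″_{n₃}] by p_d = a^{d−2}·Σ_{i=1}^{n₁} xᵢ^d + b^{d−2}·Σ_{i=1}^{n₂} (x′ᵢ)^d + c^{d−2}·Σ_{i=1}^{n₃} (x″ᵢ)^d. Fix 1 ≤ i ≤ n₁ and 1 ≤ j ≤ n₂, let α = a·eᵢ − b·e′_j (so B(α, x) = a·xᵢ − b·x′_j and B(α, α) = a² + b², where B is the standard symmetric bilinear form), and let s_α(x) = x − 2·(B(α,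 x)/B(α, α))·α. Then the polynomial p_d − p_d ∘ s_α is divisible by B(α, x)² in the polynomial ring. -/
open MvPolynomial

lemma aux_binom {R : Type*} [CommRing R] (u h : R) :
    ∀ d : ℕ, 1 ≤ d → h ^ 2 ∣ (u - h) ^ d - u ^ d + d * h * u ^ (d - 1)
  | 1, _ => by simp
  | (n+2), _ => by
    obtain ⟨q, hq⟩ := aux_binom u h (n+1) (by omega)
    simp only [Nat.add_sub_cancel] at hq ⊢
    refine ⟨(u - h) * q + (n+1) * u ^ n, ?_⟩
    push_cast
    push_cast at hq
    linear_combination (u - h) * hq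

/-- The deformed power sum
`p_d = a^{d−2} Σ xᵢ^d + b^{d−2} Σ (x′ᵢ)^d + c^{d−2} Σ (x″ᵢ)^d`. -/
noncomputable def pSum (n₁ n₂ n₃ : ℕ) (a b c : ℂ) (d : ℕ) :
    MvPolynomial (Fin n₁ ⊕ Fin n₂ ⊕ Fin n₃) ℂ :=
  C (a ^ ((d : ℤ) - 2)) * ∑ i : Fin n₁, (X (Sum.inl i)) ^ d
    + C (b ^ ((d : ℤ) - 2)) * ∑ i : Fin n₂, (X (Sum.inr (Sum.inl i))) ^ d
    + C (c ^ ((d : ℤ) - 2)) * ∑ i : Fin n₃, (X (Sum.inr (Sum.inr i))) ^ d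

/-- The coefficients of the vector `α = a·eᵢ − b·e′ⱼ`. -/
noncomputable def alphaCoef (n₁ n₂ n₃ : ℕ) (a b : ℂ) (i : Fin n₁) (j : Fin n₂) :
    (Fin n₁ ⊕ Fin n₂ ⊕ Fin n₃) → ℂ :=
  fun l => if l = Sum.inl i then a else if l = Sum.inr (Sum.inl j) then -b else 0

/-- The substitution of variables corresponding to the reflection
`s_α(x) = x − 2(B(α,x)/B(α,α))·α` for `α = a·eᵢ − b·e′ⱼ` (so `B(α,α) = a² + b²`). -/
noncomputable def reflSubst (n₁ n₂ n₃ : ℕ) (a b : ℂ) (i : Fin n₁) (j : Fin n₂) :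
    (Fin n₁ ⊕ Fin n₂ ⊕ Fin n₃) → MvPolynomial (Fin n₁ ⊕ Fin n₂ ⊕ Fin n₃) ℂ :=
  fun l => X l - C (2 * alphaCoef n₁ n₂ n₃ a b i j l / (a ^ 2 + b ^ 2)) *
    (C a * X (Sum.inl i) - C b * X (Sum.inr (Sum.inl j)))

/-- Quasi-invariance of the deformed power sums for the `A(n₁,n₂,n₃)` configuration
(Section 6.4): `p_d − p_d ∘ s_α` is divisible by `B(α,x)²` for `α = a·eᵢ − b·e′ⱼ`. -/
theorem stmt15 (n₁ n₂ n₃ : ℕ) (a b c : ℂ) (ha : a ≠ 0) (hb : b ≠ 0) (hc : c ≠ 0)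
    (hab : a ^ 2 + b ^ 2 ≠ 0) (d : ℕ) (hd : 1 ≤ d) (i : Fin n₁) (j : Fin n₂) :
    (C a * X (Sum.inl i) - C b * X (Sum.inr (Sum.inl j))) ^ 2 ∣
      (pSum n₁ n₂ n₃ a b c d -
        MvPolynomial.bind₁ (reflSubst n₁ n₂ n₃ a b i j) (pSum n₁ n₂ n₃ a b c d)) := by
  set β : MvPolynomial (Fin n₁ ⊕ Fin n₂ ⊕ Fin n₃) ℂ :=
    C a * X (Sum.inl i) - C b * X (Sum.inr (Sum.inl j)) with hβ
  set u : MvPolynomial (Fin n₁ ⊕ Fin n₂ ⊕ Fin n₃) ℂ := X (Sum.inl i) with hu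
  set y : MvPolynomial (Fin n₁ ⊕ Fin n₂ ⊕ Fin n₃) ℂ := X (Sum.inr (Sum.inl j)) with hy
  set t : ℂ := 2 * a / (a ^ 2 + b ^ 2) with ht
  set s : ℂ := 2 * b / (a ^ 2 + b ^ 2) with hs
  set σ := reflSubst n₁ n₂ n₃ a b i j with hσ
  -- description of σ
  have hσi : σ (Sum.inl i) = u - C t * β := by
    simp [hσ, reflSubst, alphaCoef, ht]; rfl
  have hσj : σ (Sum.inr (Sum.inl j)) = y + C s * β := by
    have hval : alphaCoef n₁ n₂ n₃ a b i j (Sum.inr (Sum.inl j)) = -b := by simp [alphaCoef]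
    have h1 : σ (Sum.inr (Sum.inl j)) = X (Sum.inr (Sum.inl j))
        - C (2 * (-b) / (a ^ 2 + b ^ 2)) * β := by
      rw [hσ]; simp only [reflSubst, hval]; rfl
    have h2 : 2 * (-b) / (a ^ 2 + b ^ 2) = -s := by rw [hs]; ring
    rw [h1, h2, map_neg]; ring
  have hσi' : ∀ i' : Fin n₁, i' ≠ i → σ (Sum.inl i') = X (Sum.inl i') := by
    intro i' h
    simp [hσ, reflSubst, alphaCoef, h]
  have hσj' : ∀ j' : Fin n₂, j' ≠ j → σ (Sum.inr (Sum.inl j')) = X (Sum.inr (Sum.inl j')) := by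
    intro j' h
    simp [hσ, reflSubst, alphaCoef, h]
  have hσk : ∀ l : Fin n₃, σ (Sum.inr (Sum.inr l)) = X (Sum.inr (Sum.inr l)) := by
    intro l
    simp [hσ, reflSubst, alphaCoef]
  -- the difference
  have hsum1 : (∑ i' : Fin n₁, (X (Sum.inl i' : Fin n₁ ⊕ Fin n₂ ⊕ Fin n₃)) ^ d)
      - ∑ i' : Fin n₁, (σ (Sum.inl i')) ^ d = u ^ d - (u - C t * β) ^ d := by
    rw [← Finset.sum_sub_distrib, Finset.sum_eq_single i]
    · rw [hσi]
    · intro i' _ h; rw [hσi' i' h, sub_self]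
    · intro h; exact absurd (Finset.mem_univ i) h
  have hsum2 : (∑ j' : Fin n₂, (X (Sum.inr (Sum.inl j') : Fin n₁ ⊕ Fin n₂ ⊕ Fin n₃)) ^ d)
      - ∑ j' : Fin n₂, (σ (Sum.inr (Sum.inl j'))) ^ d = y ^ d - (y + C s * β) ^ d := by
    rw [← Finset.sum_sub_distrib, Finset.sum_eq_single j]
    · rw [hσj]
    · intro j' _ h; rw [hσj' j' h, sub_self]
    · intro h; exact absurd (Finset.mem_univ j) h
  have hD : pSum n₁ n₂ n₃ a b c d - bind₁ σ (pSum n₁ n₂ n₃ a b c d)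
      = C (a ^ ((d : ℤ) - 2)) * (u ^ d - (u - C t * β) ^ d)
        + C (b ^ ((d : ℤ) - 2)) * (y ^ d - (y + C s * β) ^ d) := by
    simp only [pSum, map_add, map_mul, map_sum, map_pow, bind₁_X_right, algHom_C,
      MvPolynomial.algebraMap_eq]
    rw [← hsum1, ← hsum2]
    have : ∀ l : Fin n₃, (σ (Sum.inr (Sum.inr l))) ^ d
        = (X (Sum.inr (Sum.inr l) : Fin n₁ ⊕ Fin n₂ ⊕ Fin n₃)) ^ d := fun l => by rw [hσk]
    rw [Finset.sum_congr rfl (fun l _ => this l)]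
    ring
  obtain ⟨q₁, hq₁⟩ := aux_binom u (C t * β) d hd
  obtain ⟨q₂, hq₂⟩ := aux_binom y (-(C s * β)) d hd
  obtain ⟨q₃, hq₃⟩ := sub_dvd_pow_sub_pow (C a * u) (C b * y) (d - 1)
  -- scalar identities
  have hA : (C (a ^ ((d : ℤ) - 2)) : MvPolynomial (Fin n₁ ⊕ Fin n₂ ⊕ Fin n₃) ℂ) * C t
      = C (2 / (a ^ 2 + b ^ 2)) * (C a) ^ (d - 1) := by
    rw [← C_pow, ← C_mul, ← C_mul]
    apply congrArg
    have h1 : a ^ ((d : ℤ) - 2) = a ^ d / a ^ 2 := by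
      rw [zpow_sub₀ ha, zpow_natCast]; norm_num [zpow_ofNat]
    have h2 : a ^ d = a ^ (d - 1) * a := by
      conv_lhs => rw [show d = (d - 1) + 1 by omega]
      rw [pow_succ]
    rw [h1, h2, ht]
    field_simp
  have hB : (C (b ^ ((d : ℤ) - 2)) : MvPolynomial (Fin n₁ ⊕ Fin n₂ ⊕ Fin n₃) ℂ) * C s
      = C (2 / (a ^ 2 + b ^ 2)) * (C b) ^ (d - 1) := by
    rw [← C_pow, ← C_mul, ← C_mul]
    apply congrArg
    have h1 : b ^ ((d : ℤ) - 2) = b ^ d / b ^ 2 := by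
      rw [zpow_sub₀ hb, zpow_natCast]; norm_num [zpow_ofNat]
    have h2 : b ^ d = b ^ (d - 1) * b := by
      conv_lhs => rw [show d = (d - 1) + 1 by omega]
      rw [pow_succ]
    rw [h1, h2, hs]
    field_simp
  refine ⟨(d : MvPolynomial (Fin n₁ ⊕ Fin n₂ ⊕ Fin n₃) ℂ) * C (2 / (a ^ 2 + b ^ 2)) * q₃
      - C (a ^ ((d : ℤ) - 2)) * (C t) ^ 2 * q₁
      - C (b ^ ((d : ℤ) - 2)) * (C s) ^ 2 * q₂, ?_⟩
  rw [hD]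
  have hCau : C a * u = C a * X (Sum.inl i) := rfl
  linear_combination (-(C (a ^ ((d : ℤ) - 2)))) * hq₁ + (-(C (b ^ ((d : ℤ) - 2)))) * hq₂
    + ((d : MvPolynomial (Fin n₁ ⊕ Fin n₂ ⊕ Fin n₃) ℂ) * C (2 / (a ^ 2 + b ^ 2)) * β) * hq₃
    + ((d : MvPolynomial (Fin n₁ ⊕ Fin n₂ ⊕ Fin n₃) ℂ) * β * u ^ (d - 1)) * hA
    - ((d : MvPolynomial (Fin n₁ ⊕ Fin n₂ ⊕ Fin n₃) ℂ) * β * y ^ (d - 1)) * hB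
end

section
/- Let m ∈ ℂ and a, b ∈ ℂ with a ≠ 0, a² + b² ≠ 0, and either b² = m·a² or b² = −(1 + m)·a². Then for every x = (x₁, x₂, x₃) ∈ ℂ³ with a·x₁ − b·x₃ = 0, x₁ − x₂ ≠ 0 and a·x₂ − b·x₃ ≠ 0, the following identity holds: 2m(m+1)·a/(x₁ − x₂)³ + 2(a² + b²)·b²/(a·x₂ − b·x₃)³ = 0; and symmetrically (exchanging the roles of the first two coordinates), for every x with a·x₂ − b·x₃ = 0, x₁ − x₂ ≠ 0 and a·x₁ − b·x₃ ≠ 0: −2m(m+1)·a/(x₁ − x₂)³ + 2(a² + b²)·b²/(a·x₁ − b·x₃)³ = 0. Consequently, the configuration A₊ = {e₁ − e₂, a·e₁ − b·e₃, a·e₂ − b·e₃} in ℂ³ with multiplicities (m, 1, 1) and Coxeter part R₊ = {e₁ − e₂} satisfies the locus conditions for each of its two non-Coxeter vectors. -/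
/-- The standard symmetric bilinear form on `ℂ³`. -/
noncomputable def Bf (x y : Fin 3 → ℂ) : ℂ := ∑ i, x i * y i

/-- Case (1) of Example 7.1: the configuration
`A₊ = {e₁−e₂, a·e₁−b·e₃, a·e₂−b·e₃}` with multiplicities `(m,1,1)`, where `b² = m·a²` or
`b² = −(1+m)·a²`, satisfies the locus conditions for its two non-Coxeter vectors. -/
theorem stmt16 (m a b : ℂ) (ha : a ≠ 0) (hab : a ^ 2 + b ^ 2 ≠ 0)
    (hm : b ^ 2 = m * a ^ 2 ∨ b ^ 2 = -(1 + m) * a ^ 2) :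
    -- the first displayed identity
    (∀ x₁ x₂ x₃ : ℂ, a * x₁ - b * x₃ = 0 → x₁ - x₂ ≠ 0 → a * x₂ - b * x₃ ≠ 0 →
      2 * m * (m + 1) * a / (x₁ - x₂) ^ 3
        + 2 * (a ^ 2 + b ^ 2) * b ^ 2 / (a * x₂ - b * x₃) ^ 3 = 0) ∧
    -- the symmetric identity
    (∀ x₁ x₂ x₃ : ℂ, a * x₂ - b * x₃ = 0 → x₁ - x₂ ≠ 0 → a * x₁ - b * x₃ ≠ 0 →
      -(2 * m * (m + 1) * a) / (x₁ - x₂) ^ 3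
        + 2 * (a ^ 2 + b ^ 2) * b ^ 2 / (a * x₁ - b * x₃) ^ 3 = 0) ∧
    -- locus condition for α = a·e₁ − b·e₃
    (∀ x : Fin 3 → ℂ, Bf ![a, 0, -b] x = 0 →
      Bf ![1, -1, 0] x ≠ 0 → Bf ![0, a, -b] x ≠ 0 →
      m * (m + 1) * Bf ![1, -1, 0] ![1, -1, 0] * Bf ![a, 0, -b] ![1, -1, 0]
          / (Bf ![1, -1, 0] x) ^ 3
        + 1 * (1 + 1) * Bf ![0, a, -b] ![0, a, -b] * Bf ![a, 0, -b] ![0, a, -b]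
          / (Bf ![0, a, -b] x) ^ 3 = 0) ∧
    -- locus condition for α = a·e₂ − b·e₃
    (∀ x : Fin 3 → ℂ, Bf ![0, a, -b] x = 0 →
      Bf ![1, -1, 0] x ≠ 0 → Bf ![a, 0, -b] x ≠ 0 →
      m * (m + 1) * Bf ![1, -1, 0] ![1, -1, 0] * Bf ![0, a, -b] ![1, -1, 0]
          / (Bf ![1, -1, 0] x) ^ 3
        + 1 * (1 + 1) * Bf ![a, 0, -b] ![a, 0, -b] * Bf ![0, a, -b] ![a, 0, -b]
          / (Bf ![a, 0, -b] x) ^ 3 = 0) := by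
  have key : m * (m + 1) * a ^ 4 = (a ^ 2 + b ^ 2) * b ^ 2 := by
    rcases hm with h | h <;> rw [h] <;> ring
  have P1 : ∀ x₁ x₂ x₃ : ℂ, a * x₁ - b * x₃ = 0 → x₁ - x₂ ≠ 0 → a * x₂ - b * x₃ ≠ 0 →
      2 * m * (m + 1) * a / (x₁ - x₂) ^ 3
        + 2 * (a ^ 2 + b ^ 2) * b ^ 2 / (a * x₂ - b * x₃) ^ 3 = 0 := by
    intro x₁ x₂ x₃ h hd hd'
    have e : a * x₂ - b * x₃ = -(a * (x₁ - x₂)) := by linear_combination h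
    rw [e]
    field_simp
    linear_combination 2 * key
  have P2 : ∀ x₁ x₂ x₃ : ℂ, a * x₂ - b * x₃ = 0 → x₁ - x₂ ≠ 0 → a * x₁ - b * x₃ ≠ 0 →
      -(2 * m * (m + 1) * a) / (x₁ - x₂) ^ 3
        + 2 * (a ^ 2 + b ^ 2) * b ^ 2 / (a * x₁ - b * x₃) ^ 3 = 0 := by
    intro x₁ x₂ x₃ h hd hd'
    have e : a * x₁ - b * x₃ = a * (x₁ - x₂) := by linear_combination h
    rw [e]
    field_simp
    linear_combination (-2) * key
  refine ⟨P1, P2, ?_, ?_⟩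
  · intro x h1 h2 h3
    simp only [Bf, Fin.sum_univ_three, Matrix.cons_val_zero, Matrix.cons_val_one,
      Matrix.head_cons, Matrix.cons_val_two, Matrix.tail_cons] at h1 h2 h3 ⊢
    have h2' : x 0 - x 1 ≠ 0 := fun hc => h2 (by linear_combination hc)
    have h3' : a * x 1 - b * x 2 ≠ 0 := fun hc => h3 (by linear_combination hc)
    have := P1 (x 0) (x 1) (x 2) (by linear_combination h1) h2' h3'
    have g2 : 1 * x 0 + -1 * x 1 + 0 * x 2 = x 0 - x 1 := by ring
    have g3 : 0 * x 0 + a * x 1 + -b * x 2 = a * x 1 - b * x 2 := by ring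
    rw [g2, g3]
    rw [div_add_div _ _ (pow_ne_zero 3 h2') (pow_ne_zero 3 h3'), div_eq_zero_iff] at this ⊢
    rcases this with hnum | hden
    · left; linear_combination hnum
    · exact absurd hden (mul_ne_zero (pow_ne_zero 3 h2') (pow_ne_zero 3 h3'))
  · intro x h1 h2 h3
    simp only [Bf, Fin.sum_univ_three, Matrix.cons_val_zero, Matrix.cons_val_one,
      Matrix.head_cons, Matrix.cons_val_two, Matrix.tail_cons] at h1 h2 h3 ⊢
    have h2' : x 0 - x 1 ≠ 0 := fun hc => h2 (by linear_combination hc)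
    have h3' : a * x 0 - b * x 2 ≠ 0 := fun hc => h3 (by linear_combination hc)
    have := P2 (x 0) (x 1) (x 2) (by linear_combination h1) h2' h3'
    have g2 : 1 * x 0 + -1 * x 1 + 0 * x 2 = x 0 - x 1 := by ring
    have g3 : a * x 0 + 0 * x 1 + -b * x 2 = a * x 0 - b * x 2 := by ring
    rw [g2, g3]
    rw [div_add_div _ _ (pow_ne_zero 3 h2') (pow_ne_zero 3 h3'), div_eq_zero_iff] at this ⊢
    rcases this with hnum | hden
    · left; linear_combination hnum
    · exact absurd hden (mul_ne_zero (pow_ne_zero 3 h2') (pow_ne_zero 3 h3'))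
end

section
/- Let A be an associative unital ring, let a, b, δ ∈ A, and let N ≥ 0 be an integer such that ad_{a,b}^{N+1}(δ) = 0 and ad_{b,a}^{N+1}(δ) = 0. Then ad_{a}^{2N}(δ·δ) = C(2N, N)·ad_{a,b}^{N}(δ)·ad_{b,a}^{N}(δ). -/
lemma adOp_zero {A : Type*} [Ring A] (a b : A) : adOp a b 0 = 0 := by
  simp [adOp]

lemma adOp_iter_zero {A : Type*} [Ring A] (a b : A) (n : ℕ) : (adOp a b)^[n] 0 = 0 := by
  induction n with
  | zero => rfl
  | succ n ih => rw [Function.iterate_succ_apply, adOp_zero, ih]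

lemma adOp_sum {A : Type*} [Ring A] (a : A) (s : Finset ℕ) (f : ℕ → A) :
    adOp a a (∑ i ∈ s, f i) = ∑ i ∈ s, adOp a a (f i) := by
  simp [adOp, Finset.mul_sum, Finset.sum_mul, ← Finset.sum_sub_distrib]

lemma adOp_smul {A : Type*} [Ring A] (a : A) (n : ℕ) (x : A) :
    adOp a a (n • x) = n • adOp a a x := by
  simp only [adOp, nsmul_eq_mul, mul_sub]
  rw [← mul_assoc a, ← (Nat.cast_commute (α := A) n a).eq, mul_assoc, mul_assoc]

lemma adOp_leibniz {A : Type*} [Ring A] (a b x y : A) :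
    adOp a a (x * y) = adOp a b x * y + x * adOp b a y := by
  simp only [adOp]; noncomm_ring

lemma adOp_iterate_mul {A : Type*} [Ring A] (a b x y : A) (n : ℕ) :
    (adOp a a)^[n] (x * y) =
      ∑ i ∈ Finset.range (n + 1),
        n.choose i • ((adOp a b)^[i] x * (adOp b a)^[n - i] y) := by
  induction n with
  | zero => simp
  | succ n ih =>
    rw [Function.iterate_succ_apply', ih, adOp_sum]
    have step : ∀ i ∈ Finset.range (n + 1),
        adOp a a (n.choose i • ((adOp a b)^[i] x * (adOp b a)^[n - i] y)) =
        n.choose i • ((adOp a b)^[i + 1] x * (adOp b a)^[n + 1 - (i + 1)] y)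
          + n.choose i • ((adOp a b)^[i] x * (adOp b a)^[n + 1 - i] y) := by
      intro i hi
      rw [Finset.mem_range] at hi
      rw [adOp_smul, adOp_leibniz, smul_add, Function.iterate_succ_apply']
      have h1 : n + 1 - i = (n - i) + 1 := by omega
      rw [h1, Function.iterate_succ_apply']
      have h2 : n + 1 - (i + 1) = n - i := by omega
      rw [h2]
    rw [Finset.sum_congr rfl step, Finset.sum_add_distrib]
    have key2 : ∑ i ∈ Finset.range (n + 2),
        (n + 1).choose i • ((adOp a b)^[i] x * (adOp b a)^[n + 1 - i] y)
      = (∑ i ∈ Finset.range (n + 1),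
          n.choose i • ((adOp a b)^[i + 1] x * (adOp b a)^[n + 1 - (i + 1)] y))
        + ∑ i ∈ Finset.range (n + 2),
          n.choose i • ((adOp a b)^[i] x * (adOp b a)^[n + 1 - i] y) := by
      rw [Finset.sum_range_succ'
            (fun i => (n + 1).choose i • ((adOp a b)^[i] x * (adOp b a)^[n + 1 - i] y)) (n + 1),
          Finset.sum_range_succ'
            (fun i => n.choose i • ((adOp a b)^[i] x * (adOp b a)^[n + 1 - i] y)) (n + 1)]
      simp only [Nat.choose_succ_succ, add_smul, Nat.choose_zero_right, one_smul]
      rw [Finset.sum_add_distrib]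
      abel
    rw [key2]
    have e3 : ∑ i ∈ Finset.range (n + 2),
        n.choose i • ((adOp a b)^[i] x * (adOp b a)^[n + 1 - i] y)
      = ∑ i ∈ Finset.range (n + 1),
        n.choose i • ((adOp a b)^[i] x * (adOp b a)^[n + 1 - i] y) := by
      rw [Finset.sum_range_succ]
      simp [Nat.choose_succ_self]
    rw [e3]

/-- The computation in the proof of Proposition 5.7: if `ad_{a,b}^{N+1} δ = 0` and
`ad_{b,a}^{N+1} δ = 0`, then `ad_a^{2N}(δ·δ) = C(2N,N)·ad_{a,b}^N(δ)·ad_{b,a}^N(δ)`. -/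
theorem stmt18 {A : Type*} [Ring A] (a b δ : A) (N : ℕ)
    (h1 : (adOp a b)^[N + 1] δ = 0) (h2 : (adOp b a)^[N + 1] δ = 0) :
    (adOp a a)^[2 * N] (δ * δ) =
      (2 * N).choose N • ((adOp a b)^[N] δ * (adOp b a)^[N] δ) := by
  rw [adOp_iterate_mul a b δ δ (2 * N)]
  have hN : 2 * N - N = N := by omega
  rw [show (∑ i ∈ Finset.range (2 * N + 1),
      (2 * N).choose i • ((adOp a b)^[i] δ * (adOp b a)^[2 * N - i] δ))
    = (2 * N).choose N • ((adOp a b)^[N] δ * (adOp b a)^[2 * N - N] δ) from ?_, hN]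
  refine Finset.sum_eq_single N ?_ ?_
  · intro i hi hne
    rw [Finset.mem_range] at hi
    rcases lt_or_gt_of_ne hne with h | h
    · have hs : 2 * N - i = (2 * N - i - (N + 1)) + (N + 1) := by omega
      rw [hs, Function.iterate_add_apply, h2, adOp_iter_zero, mul_zero, smul_zero]
    · have hs : i = (i - (N + 1)) + (N + 1) := by omega
      rw [hs, Function.iterate_add_apply, h1, adOp_iter_zero, zero_mul, smul_zero]
  · intro h
    exact absurd (Finset.mem_range.mpr (by omega)) h
end
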